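/- Fix a graph G, a function α : V → ℕ, and a set W ⊆ V. If in some α-orientation X₀ of G all edges between W and V∖W are directed away from W, then in every α-orientation of G all edges between W and V∖W are directed away from W (i.e., these edges are rigid). -/

import Mathlib

/-- `D` is an orientation of the simple graph `G`, given as the set of directed
edges: for every edge `{a,b}` of `G` exactly one of `(a,b)`, `(b,a)` belongs to `D`,
and `D` contains only pairs corresponding to edges of `G`. -/
def IsOrient {V : Type*} (G : SimpleGraph V) (D : Finset (V × V)) : Prop :=
  (∀ p ∈ D, G.Adj p.1 p.2) ∧ ∀ a b : V, G.Adj a b → ((a, b) ∈ D ↔ (b, a) ∉ D)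

/-- The out-degree of `v` in the orientation `D`. -/
def outD {V : Type*} [DecidableEq V] (D : Finset (V × V)) (v : V) : ℕ :=
  (D.filter (fun p => p.1 = v)).card

lemma orient_swap {V : Type*} (G : SimpleGraph V) {X : Finset (V × V)}
    (hX : IsOrient G X) {p : V × V} (hp : p ∈ X) : p.swap ∉ X := by
  have h := hX.1 p hp
  exact (hX.2 p.1 p.2 h).mp hp

lemma sym_card_le {V : Type*} [DecidableEq V] (G : SimpleGraph V) {X Y : Finset (V × V)}
    (hX : IsOrient G X) (hY : IsOrient G Y) (P : V × V → Prop) [DecidablePred P]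
    (hP : ∀ p, P p → P p.swap) :
    (X.filter P).card ≤ (Y.filter P).card := by
  apply Finset.card_le_card_of_injOn (fun p => if p ∈ Y then p else p.swap)
  · intro p hp
    change p ∈ X.filter P at hp
    change (if p ∈ Y then p else p.swap) ∈ Y.filter P
    simp only [Finset.mem_filter] at hp ⊢
    by_cases h : p ∈ Y
    · simp only [if_pos h]
      exact ⟨h, hp.2⟩
    · have hadj := hX.1 p hp.1
      have hsw : p.swap ∈ Y := (hY.2 p.2 p.1 hadj.symm).mpr (by simpa using h)
      simp only [if_neg h]
      exact ⟨hsw, hP p hp.2⟩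
  · intro p hp q hq hpq
    simp only [Finset.mem_filter, Finset.mem_coe] at hp hq
    by_cases h1 : p ∈ Y <;> by_cases h2 : q ∈ Y <;> simp only [h1, h2, if_pos, if_neg,
      if_true, if_false] at hpq
    · exact hpq
    · exfalso
      apply orient_swap G hX hq.1
      rw [← hpq]; exact hp.1
    · exfalso
      apply orient_swap G hX hp.1
      rw [hpq]; exact hq.1
    · exact Prod.swap_injective hpq

lemma sym_card_eq {V : Type*} [DecidableEq V] (G : SimpleGraph V) {X Y : Finset (V × V)}
    (hX : IsOrient G X) (hY : IsOrient G Y) (P : V × V → Prop) [DecidablePred P]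
    (hP : ∀ p, P p → P p.swap) :
    (X.filter P).card = (Y.filter P).card :=
  le_antisymm (sym_card_le G hX hY P hP) (sym_card_le G hY hX P hP)

lemma sum_outD_eq {V : Type*} [DecidableEq V] (Y : Finset (V × V)) (W : Finset V) :
    ∑ w ∈ W, outD Y w = (Y.filter (fun p => p.1 ∈ W)).card := by
  rw [Finset.card_eq_sum_card_fiberwise (f := Prod.fst) (t := W) (s := Y.filter (fun p => p.1 ∈ W))
    (fun p hp => (Finset.mem_filter.mp (Finset.mem_coe.mp hp)).2)]
  apply Finset.sum_congr rfl
  intro w hw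
  rw [Finset.filter_filter]
  unfold outD
  congr 1
  apply Finset.filter_congr
  intro p _
  constructor
  · intro h; exact ⟨h ▸ hw, h⟩
  · intro h; exact h.2

lemma filter_split {V : Type*} [DecidableEq V] (Y : Finset (V × V))
    (P Q : V × V → Prop) [DecidablePred P] [DecidablePred Q] :
    (Y.filter P).card =
      (Y.filter (fun p => P p ∧ Q p)).card + (Y.filter (fun p => P p ∧ ¬ Q p)).card := by
  rw [← Finset.filter_filter, ← Finset.filter_filter]
  exact (Finset.card_filter_add_card_filter_not (s := Y.filter P) (p := Q)).symm

/-- If in some `α`-orientation `X₀` all edges between `W` and its complement are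
directed away from `W`, then the same holds in every `α`-orientation: these edges
are rigid. -/
theorem cut_edges_rigid
    {V : Type*} [Fintype V] [DecidableEq V]
    (G : SimpleGraph V) (α : V → ℕ) (W : Finset V)
    (X₀ : Finset (V × V)) (hX₀ : IsOrient G X₀)
    (hα₀ : ∀ v, outD X₀ v = α v)
    (haway : ∀ p ∈ X₀, p.2 ∈ W → p.1 ∈ W) :
    ∀ X : Finset (V × V), IsOrient G X → (∀ v, outD X v = α v) →
      ∀ p ∈ X, p.2 ∈ W → p.1 ∈ W := by
  intro X hX hXα p hp hp2
  by_contra hp1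
  -- counting
  have hsum : (X.filter (fun p => p.1 ∈ W)).card = (X₀.filter (fun p => p.1 ∈ W)).card := by
    rw [← sum_outD_eq, ← sum_outD_eq]
    apply Finset.sum_congr rfl
    intro w _
    rw [hXα, hα₀]
  have hA : (X.filter (fun p => p.1 ∈ W ∧ p.2 ∈ W)).card
      = (X₀.filter (fun p => p.1 ∈ W ∧ p.2 ∈ W)).card :=
    sym_card_eq G hX hX₀ _ (fun q hq => ⟨hq.2, hq.1⟩)
  have hBout : (X.filter (fun p => p.1 ∈ W ∧ p.2 ∉ W)).card
      = (X₀.filter (fun p => p.1 ∈ W ∧ p.2 ∉ W)).card := by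
    have h1 := filter_split X (fun p => p.1 ∈ W) (fun p => p.2 ∈ W)
    have h2 := filter_split X₀ (fun p => p.1 ∈ W) (fun p => p.2 ∈ W)
    omega
  have hC : (X.filter (fun p => ¬(p.1 ∈ W ↔ p.2 ∈ W))).card
      = (X₀.filter (fun p => ¬(p.1 ∈ W ↔ p.2 ∈ W))).card :=
    sym_card_eq G hX hX₀ _ (fun q hq h => hq (Iff.symm h))
  have hCsplit : ∀ Y : Finset (V × V),
      (Y.filter (fun p => ¬(p.1 ∈ W ↔ p.2 ∈ W))).card
      = (Y.filter (fun p => p.1 ∈ W ∧ p.2 ∉ W)).card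
        + (Y.filter (fun p => p.1 ∉ W ∧ p.2 ∈ W)).card := by
    intro Y
    rw [filter_split Y (fun p => ¬(p.1 ∈ W ↔ p.2 ∈ W)) (fun p => p.1 ∈ W)]
    congr 1
    · congr 1
      apply Finset.filter_congr
      intro q _
      by_cases h1 : q.1 ∈ W <;> by_cases h2 : q.2 ∈ W <;> simp [h1, h2]
    · congr 1
      apply Finset.filter_congr
      intro q _
      by_cases h1 : q.1 ∈ W <;> by_cases h2 : q.2 ∈ W <;> simp [h1, h2]
  have hBin0 : (X₀.filter (fun p => p.1 ∉ W ∧ p.2 ∈ W)).card = 0 := by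
    rw [Finset.card_eq_zero, Finset.filter_eq_empty_iff]
    intro q hq
    intro h
    exact h.1 (haway q hq h.2)
  have hBinX : (X.filter (fun p => p.1 ∉ W ∧ p.2 ∈ W)).card = 0 := by
    have c1 := hCsplit X
    have c2 := hCsplit X₀
    omega
  rw [Finset.card_eq_zero, Finset.filter_eq_empty_iff] at hBinX
  exact hBinX hp ⟨hp1, hp2⟩
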